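/- Let σ_t > 0, let 0 < σ̃_A < σ̃_B, and let c > 0 satisfy c < (σ_t²/σ̃_B)·(2π)^(−1/2). For i ∈ {A, B} set a_i = σ_t²/σ̃_i and let z_i* be the unique zero of z ↦ a_i·(φ(z) − z·Φᶜ(z)) − c. Then the optimal per-hire utilities satisfy a_A·z_A* > a_B·z_B* > 0; that is, the principal's optimal net expected utility per hired applicant is strictly larger for the group with the less noisy signal. -/

import Mathlib

open MeasureTheory ProbabilityTheory Real

/-- Standard normal density. -/
noncomputable def stdPdf (x : ℝ) : ℝ := (Real.sqrt (2 * Real.pi))⁻¹ * Real.exp (-(x ^ 2) / 2)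

/-- Standard normal CDF. -/
noncomputable def stdCdf (x : ℝ) : ℝ := ∫ u in Set.Iic x, stdPdf u

/-- Standard normal complementary CDF. -/
noncomputable def stdCcdf (x : ℝ) : ℝ := 1 - stdCdf x

/-- Standard normal hazard rate. -/
noncomputable def hazard (x : ℝ) : ℝ := stdPdf x / stdCcdf x

lemma continuous_stdPdf : Continuous stdPdf := by
  unfold stdPdf; fun_prop

lemma stdPdf_pos (x : ℝ) : 0 < stdPdf x := by
  unfold stdPdf
  positivity

lemma integrable_stdPdf : Integrable stdPdf := by
  have h : Integrable (fun x : ℝ => Real.exp (-(1/2 : ℝ) * x ^ 2)) :=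
    integrable_exp_neg_mul_sq (by norm_num)
  have := h.const_mul (Real.sqrt (2 * Real.pi))⁻¹
  apply this.congr
  filter_upwards with x
  unfold stdPdf
  ring_nf

lemma integral_stdPdf : ∫ x, stdPdf x = 1 := by
  have h : ∫ x : ℝ, Real.exp (-(1/2 : ℝ) * x ^ 2) = Real.sqrt (Real.pi / (1/2)) :=
    integral_gaussian (1/2)
  have h2 : ∫ x, stdPdf x = (Real.sqrt (2 * Real.pi))⁻¹ * ∫ x : ℝ, Real.exp (-(1/2:ℝ) * x ^ 2) := by
    rw [← integral_const_mul]
    congr 1; funext x; unfold stdPdf; ring_nf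
  rw [h2, h]
  rw [show Real.pi / (1/2 : ℝ) = 2 * Real.pi by ring]
  rw [inv_mul_cancel₀]
  positivity

lemma stdCcdf_pos (x : ℝ) : 0 < stdCcdf x := by
  have hsplit : stdCdf x + ∫ u in Set.Ioi x, stdPdf u = 1 := by
    rw [stdCdf, intervalIntegral.integral_Iic_add_Ioi integrable_stdPdf.integrableOn integrable_stdPdf.integrableOn,
      integral_stdPdf]
  have hpos : 0 < ∫ u in Set.Ioi x, stdPdf u := by
    rw [setIntegral_pos_iff_support_of_nonneg_ae]
    · have : Function.support stdPdf = Set.univ := by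
        ext y; simp [Function.mem_support, (stdPdf_pos y).ne']
      rw [this, Set.univ_inter]
      simp
    · filter_upwards with y using (stdPdf_pos y).le
    · exact integrable_stdPdf.integrableOn
  unfold stdCcdf
  linarith

lemma hasDerivAt_stdCdf (x : ℝ) : HasDerivAt stdCdf (stdPdf x) x := by
  have h : ∀ y, stdCdf y = stdCdf 0 + ∫ t in (0:ℝ)..y, stdPdf t := by
    intro y
    have := intervalIntegral.integral_Iic_sub_Iic (f := stdPdf) (μ := volume)
      (a := 0) (b := y) integrable_stdPdf.integrableOn integrable_stdPdf.integrableOn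
    unfold stdCdf
    linarith [this]
  have hd : HasDerivAt (fun y => stdCdf 0 + ∫ t in (0:ℝ)..y, stdPdf t) (stdPdf x) x := by
    refine HasDerivAt.const_add _ ?_
    exact intervalIntegral.integral_hasDerivAt_right
      (continuous_stdPdf.intervalIntegrable _ _)
      (continuous_stdPdf.stronglyMeasurableAtFilter _ _)
      continuous_stdPdf.continuousAt
  exact (funext h : stdCdf = _) ▸ hd

lemma hasDerivAt_stdPdf (x : ℝ) : HasDerivAt stdPdf (-x * stdPdf x) x := by
  have h1 : HasDerivAt (fun y : ℝ => -(y ^ 2) / 2) (-x) x := by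
    have := ((hasDerivAt_pow 2 x).neg).div_const 2
    exact this.congr_deriv (by simp; ring)
  have h2 := (h1.exp).const_mul (Real.sqrt (2 * Real.pi))⁻¹
  exact h2.congr_deriv (by unfold stdPdf; ring)

noncomputable def gfun (z : ℝ) : ℝ := stdPdf z - z * stdCcdf z

lemma hasDerivAt_gfun (x : ℝ) : HasDerivAt gfun (-stdCcdf x) x := by
  have hc : HasDerivAt stdCcdf (-stdPdf x) x := by
    exact (by simpa using (hasDerivAt_stdCdf x).const_sub 1 : HasDerivAt (fun x => 1 - stdCdf x) (-stdPdf x) x)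
  have h := (hasDerivAt_stdPdf x).sub ((hasDerivAt_id x).mul hc)
  exact h.congr_deriv (by simp only [id]; ring)

lemma strictAnti_gfun : StrictAnti gfun := by
  refine strictAnti_of_deriv_neg (fun x => ?_)
  rw [(hasDerivAt_gfun x).deriv]
  linarith [stdCcdf_pos x]

/-- Disparate-variance model: the group with the less noisy signal yields a strictly larger
optimal net expected utility per hired applicant. With `a_i = σ_t²/σ̃_i` and `z_i*` the zero
of `z ↦ a_i·(φ(z) − z·Φᶜ(z)) − c`, if `σ̃_A < σ̃_B` and `c < (σ_t²/σ̃_B)·(2π)^(−1/2)`, then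
`a_A·z_A* > a_B·z_B* > 0`. -/
theorem advantaged_group_better_utility (σt σtA σtB c zA zB : ℝ)
    (hσt : 0 < σt) (hA : 0 < σtA) (hAB : σtA < σtB)
    (hc : 0 < c) (hviable : c < σt ^ 2 / σtB / Real.sqrt (2 * Real.pi))
    (hzA : σt ^ 2 / σtA * (stdPdf zA - zA * stdCcdf zA) - c = 0)
    (hzB : σt ^ 2 / σtB * (stdPdf zB - zB * stdCcdf zB) - c = 0) :
    σt ^ 2 / σtA * zA > σt ^ 2 / σtB * zB ∧ 0 < σt ^ 2 / σtB * zB := by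
  have hB : 0 < σtB := hA.trans hAB
  have hσt2 : (0:ℝ) < σt ^ 2 := by positivity
  have haA : 0 < σt ^ 2 / σtA := by positivity
  have haB : 0 < σt ^ 2 / σtB := by positivity
  have hgA : gfun zA = c * σtA / σt ^ 2 := by
    unfold gfun
    field_simp at hzA ⊢
    nlinarith [hzA]
  have hgB : gfun zB = c * σtB / σt ^ 2 := by
    unfold gfun
    field_simp at hzB ⊢
    nlinarith [hzB]
  have hgApos : 0 < gfun zA := by rw [hgA]; positivity
  have hgBpos : 0 < gfun zB := by rw [hgB]; positivity
  have hgAB : gfun zA < gfun zB := by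
    rw [hgA, hgB]
    gcongr
  have hzAB : zB < zA := strictAnti_gfun.lt_iff_gt.mp hgAB
  have hg0 : gfun 0 = (Real.sqrt (2 * Real.pi))⁻¹ := by
    simp [gfun, stdPdf]
  have hsq : 0 < Real.sqrt (2 * Real.pi) := by positivity
  have hzB0 : 0 < zB := by
    have h1 : gfun zB < gfun 0 := by
      rw [hgB, hg0]
      rw [lt_div_iff₀ hsq, lt_div_iff₀ hB] at hviable
      have hinv : (Real.sqrt (2 * Real.pi))⁻¹ * Real.sqrt (2 * Real.pi) = 1 :=
        inv_mul_cancel₀ hsq.ne'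
      rw [div_lt_iff₀ hσt2]
      nlinarith [hviable, hinv, inv_pos.mpr hsq]
    exact strictAnti_gfun.lt_iff_gt.mp h1
  constructor
  · have keyA : σt ^ 2 / σtA * gfun zA = c := by unfold gfun; linarith
    have keyB : σt ^ 2 / σtB * gfun zB = c := by unfold gfun; linarith
    have h1 : zB * gfun zA < zA * gfun zB := by nlinarith
    have e1 : σt ^ 2 / σtA * zA * (gfun zA * gfun zB) = c * (zA * gfun zB) := by
      rw [← keyA]; ring
    have e2 : σt ^ 2 / σtB * zB * (gfun zA * gfun zB) = c * (zB * gfun zA) := by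
      rw [← keyB]; ring
    have h2 : σt ^ 2 / σtA * zA * (gfun zA * gfun zB) > σt ^ 2 / σtB * zB * (gfun zA * gfun zB) := by
      rw [e1, e2]; exact mul_lt_mul_of_pos_left h1 hc
    have h3 : 0 < gfun zA * gfun zB := mul_pos hgApos hgBpos
    exact lt_of_mul_lt_mul_right (by linarith) h3.le
  · positivity
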